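/- Let R > 0 and let f : (-R, R) → ℝ be differentiable with M₂-Lipschitz derivative (M₂-smooth). Then for every 0 < γ ≤ 1, the function x ↦ f(γx)/γ − f'(0)·x is (γ·M₂·R)-Lipschitz on (-R, R); that is, for all x, y ∈ (-R, R), |(f(γx)/γ − f'(0)x) − (f(γy)/γ − f'(0)y)| ≤ γ·M₂·R·|x − y|. -/

import Mathlib

/-- Let `R > 0` and `f : (-R, R) → ℝ` be differentiable with `M₂`-Lipschitz
derivative `f'`. Then for every `0 < γ ≤ 1`, the function `x ↦ f(γx)/γ - f'(0)·x` is
`(γ·M₂·R)`-Lipschitz on `(-R, R)`. -/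
theorem dilation_sub_linear_lipschitz
    (R M₂ : ℝ) (hR : 0 < R) (f f' : ℝ → ℝ)
    (hderiv : ∀ x ∈ Set.Ioo (-R) R, HasDerivAt f (f' x) x)
    (hsmooth : ∀ x ∈ Set.Ioo (-R) R, ∀ y ∈ Set.Ioo (-R) R, |f' x - f' y| ≤ M₂ * |x - y|)
    (γ : ℝ) (hγ0 : 0 < γ) (hγ1 : γ ≤ 1) :
    ∀ x ∈ Set.Ioo (-R) R, ∀ y ∈ Set.Ioo (-R) R,
      |(f (γ * x) / γ - f' 0 * x) - (f (γ * y) / γ - f' 0 * y)| ≤ γ * M₂ * R * |x - y| := by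
  intro x hx y hy
  have h0 : (0 : ℝ) ∈ Set.Ioo (-R) R := by constructor <;> linarith
  have hR2 : (R / 2 : ℝ) ∈ Set.Ioo (-R) R := by constructor <;> linarith
  have hM : 0 ≤ M₂ := by
    have := hsmooth 0 h0 (R / 2) hR2
    have h1 : (0 : ℝ) ≤ |f' 0 - f' (R / 2)| := abs_nonneg _
    have h2 : |(0 : ℝ) - R / 2| = R / 2 := by rw [abs_of_nonpos] <;> linarith
    rw [h2] at this
    nlinarith
  have hmem : ∀ z ∈ Set.Ioo (-R) R, γ * z ∈ Set.Ioo (-R) R := by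
    intro z hz
    obtain ⟨hz1, hz2⟩ := hz
    have hzabs : |z| < R := abs_lt.mpr ⟨hz1, hz2⟩
    have : |γ * z| < R := by
      rw [abs_mul, abs_of_pos hγ0]
      calc γ * |z| ≤ 1 * |z| := by nlinarith [abs_nonneg z]
        _ < R := by simpa using hzabs
    exact ⟨(abs_lt.mp this).1, (abs_lt.mp this).2⟩
  set g : ℝ → ℝ := fun z => f (γ * z) / γ - f' 0 * z with hg
  have hgderiv : ∀ z ∈ Set.Ioo (-R) R,
      HasDerivWithinAt g (f' (γ * z) - f' 0) (Set.Ioo (-R) R) z := by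
    intro z hz
    have h1 : HasDerivAt (fun w => f (γ * w)) (f' (γ * z) * γ) z := by
      have := (hderiv (γ * z) (hmem z hz)).comp z ((hasDerivAt_id z).const_mul γ)
      simpa [mul_comm, Function.comp_def] using this
    have h2 : HasDerivAt g (f' (γ * z) * γ / γ - f' 0) z := by
      simpa [hg, Pi.sub_def] using ((h1.div_const γ)).sub ((hasDerivAt_id z).const_mul (f' 0))
    have heq : f' (γ * z) * γ / γ - f' 0 = f' (γ * z) - f' 0 := by
      field_simp
    rw [heq] at h2
    exact h2.hasDerivWithinAt
  have hbound : ∀ z ∈ Set.Ioo (-R) R, ‖f' (γ * z) - f' 0‖ ≤ γ * M₂ * R := by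
    intro z hz
    have := hsmooth (γ * z) (hmem z hz) 0 h0
    have hzabs : |z| < R := abs_lt.mpr ⟨hz.1, hz.2⟩
    have h2 : |γ * z - 0| = γ * |z| := by
      rw [sub_zero, abs_mul, abs_of_pos hγ0]
    rw [h2] at this
    calc ‖f' (γ * z) - f' 0‖ ≤ M₂ * (γ * |z|) := this
      _ ≤ γ * M₂ * R := by nlinarith [abs_nonneg z, mul_nonneg hM hγ0.le]
  have hconv : Convex ℝ (Set.Ioo (-R) R) := convex_Ioo _ _
  have := hconv.norm_image_sub_le_of_norm_hasDerivWithin_le hgderiv hbound hy hx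
  calc |(f (γ * x) / γ - f' 0 * x) - (f (γ * y) / γ - f' 0 * y)| = ‖g x - g y‖ := rfl
    _ ≤ γ * M₂ * R * ‖x - y‖ := this
    _ = γ * M₂ * R * |x - y| := rfl
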